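/- (Guaranteed nonzero low coefficient after shifting) Let Q(X, Y_1, ..., Y_s) = Σ_i a_{0i} X^(q^i) + Σ_{j=1}^s Σ_i a_{ji} Y_j^(q^i) be a nonzero polynomial over F_{q^m} of the above form, and let j* be the smallest index such that a_{ij*} ≠ 0 for some 0 ≤ i ≤ s. Suppose further that the univariate linearized polynomial Q̂(X) := Q(X, f(γX), ..., f(γ^(q^(s-1))X)) is identically zero for some linearized polynomial f over F_q and some γ. Then a_{ij*} ≠ 0 for some i with 1 ≤ i ≤ s. -/

import Mathlib

open Polynomial Finset

/-- Guaranteed nonzero low coefficient after shifting: if j* is the smallest index with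
a_{rj*} ≠ 0 for some r, and Q̂(X) = Q(X, f(γX), ..., f(γ^(q^(s-1))X)) is identically
zero, then a_{rj*} ≠ 0 for some r with 1 ≤ r ≤ s. -/
theorem nonzero_low_coefficient (K F : Type*) [Field K] [Field F] [Algebra K F]
    [Fintype K] (q s M k : ℕ) (hq : Fintype.card K = q)
    (a : Fin (s + 1) → ℕ → F) (hsupp : ∀ r : Fin (s + 1), ∀ i : ℕ, M ≤ i → a r i = 0)
    (u : Fin k → K) (γ : F)
    (jstar : ℕ) (hmin : ∀ j : ℕ, j < jstar → ∀ r : Fin (s + 1), a r j = 0)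
    (hne : ∃ r : Fin (s + 1), a r jstar ≠ 0)
    (hQhat : (∑ i ∈ Finset.range M, C (a 0 i) * X ^ q ^ i)
      + ∑ j : Fin s,
          (∑ i ∈ Finset.range M, C (a j.succ i) * X ^ q ^ i).comp
            (∑ c : Fin k,
              C (algebraMap K F (u c) * (γ ^ q ^ (j : ℕ)) ^ q ^ (c : ℕ))
                * X ^ q ^ (c : ℕ)) = 0) :
    ∃ r : Fin (s + 1), r ≠ 0 ∧ a r jstar ≠ 0 := by
  by_contra hcon
  push_neg at hcon
  -- all nonzero-index coefficients at jstar vanish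
  have hzero : ∀ r : Fin (s + 1), r ≠ 0 → a r jstar = 0 := hcon
  have ha0 : a 0 jstar ≠ 0 := by
    obtain ⟨r0, hr0⟩ := hne
    rcases eq_or_ne r0 0 with h0 | h0
    · rwa [h0] at hr0
    · exact absurd (hzero r0 h0) hr0
  have hq2 : 2 ≤ q := hq ▸ Fintype.one_lt_card
  have hq1 : 1 < q := hq2
  have hjM : jstar < M := by
    by_contra hj; push_neg at hj; exact ha0 (hsupp 0 jstar hj)
  -- take coefficient at q^jstar
  have hco := congrArg (fun p => Polynomial.coeff p (q ^ jstar)) hQhat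
  simp only [Polynomial.coeff_add, Polynomial.coeff_zero] at hco
  -- first sum coefficient = a 0 jstar
  have h1 : (∑ i ∈ Finset.range M, C (a 0 i) * X ^ q ^ i).coeff (q ^ jstar)
      = a 0 jstar := by
    rw [Polynomial.finset_sum_coeff]
    rw [Finset.sum_eq_single jstar]
    · simp
    · intro i hi hine
      have : q ^ jstar ≠ q ^ i := fun h =>
        hine (Nat.pow_right_injective hq2 h).symm
      simp [Polynomial.coeff_C_mul, Polynomial.coeff_X_pow, this]
    · intro h
      simp [Finset.mem_range, hjM] at h
  -- each composed term has zero coefficient at q^jstar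
  have h2 : ∀ j : Fin s,
      ((∑ i ∈ Finset.range M, C (a j.succ i) * X ^ q ^ i).comp
        (∑ c : Fin k,
          C (algebraMap K F (u c) * (γ ^ q ^ (j : ℕ)) ^ q ^ (c : ℕ))
            * X ^ q ^ (c : ℕ))).coeff (q ^ jstar) = 0 := by
    intro j
    set g : F[X] := ∑ c : Fin k,
      C (algebraMap K F (u c) * (γ ^ q ^ (j : ℕ)) ^ q ^ (c : ℕ)) * X ^ q ^ (c : ℕ)
      with hg
    have hXdvd : X ∣ g := by
      apply Finset.dvd_sum
      intro c _
      exact Dvd.dvd.mul_left (dvd_pow_self X (pow_pos (show 0 < q by omega) _).ne') _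
    rw [Polynomial.sum_comp, Polynomial.finset_sum_coeff]
    apply Finset.sum_eq_zero
    intro i _
    rw [Polynomial.mul_comp, Polynomial.C_comp, Polynomial.X_pow_comp,
      Polynomial.coeff_C_mul]
    rcases le_or_gt i jstar with hij | hij
    · rcases lt_or_eq_of_le hij with hlt | heq
      · rw [hmin i hlt j.succ, zero_mul]
      · rw [heq, hzero j.succ (Fin.succ_ne_zero j), zero_mul]
    · -- coeff (g ^ q^i) (q^jstar) = 0 since X^{q^i} ∣ g^{q^i} and q^jstar < q^i
      obtain ⟨t, ht⟩ : X ^ q ^ i ∣ g ^ q ^ i := pow_dvd_pow_of_dvd hXdvd _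
      have hlt : q ^ jstar < q ^ i := Nat.pow_lt_pow_right hq1 hij
      rw [ht, mul_comm (X ^ q ^ i) t, Polynomial.coeff_mul_X_pow']
      simp [Nat.not_le_of_lt hlt]
  rw [h1, Polynomial.finset_sum_coeff,
    Finset.sum_eq_zero (fun j _ => h2 j), add_zero] at hco
  exact ha0 hco
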